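/- Assume ignorability and that ‖f₀(x)‖ ≤ 1 for all x. Let G₀ : ℝ^p → ℝ^{d×d} be a bounded measurable matrix-valued function such that, almost surely, G₀(X) satisfies the Penrose equations for Σ₀(X), and let H : ℝ^p → ℝ^{d×d} be any bounded measurable matrix-valued function. Then for any policies π, π' with ‖π(x)‖ ≤ B and ‖π'(x)‖ ≤ B for all x: |E[((H(X) − G₀(X)) Z C)ᵀ (π(X) − π'(X))]| ≤ 2B · (E[‖(H(X) − G₀(X)) Σ₀(X)‖²_Fro])^(1/2), where ‖·‖_Fro denotes the Frobenius norm. -/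

import Mathlib

open MeasureTheory Matrix

/-- `G` satisfies the four Penrose equations for `S`. -/
def Penrose {d : ℕ} (S G : Matrix (Fin d) (Fin d) ℝ) : Prop :=
  S * G * S = S ∧ G * S * G = G ∧ (S * G)ᵀ = S * G ∧ (G * S)ᵀ = G * S

/-- Euclidean norm of a vector in `ℝ^d`. -/
noncomputable def eucNorm {d : ℕ} (v : Fin d → ℝ) : ℝ := Real.sqrt (∑ i, v i ^ 2)

/-- Frobenius norm of a real `d × d` matrix. -/
noncomputable def frobNorm {d : ℕ} (M : Matrix (Fin d) (Fin d) ℝ) : ℝ :=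
  Real.sqrt (∑ i, ∑ j, M i j ^ 2)

section Helpers

variable {Ω : Type*} [MeasurableSpace Ω] {μ : Measure Ω}


lemma integrable_of_bdd [IsFiniteMeasure μ] {f : Ω → ℝ} (hf : Measurable f)
    {M : ℝ} (h : ∀ ω, |f ω| ≤ M) : Integrable f μ :=
  (integrable_const M).mono' hf.aestronglyMeasurable
    (Filter.Eventually.of_forall fun ω => by simpa [Real.norm_eq_abs] using h ω)

lemma integral_mul_condexp_eq {Ω : Type*} {m0 : MeasurableSpace Ω} {μ : Measure Ω}
    [IsProbabilityMeasure μ]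
    {m : MeasurableSpace Ω} (hm : m ≤ m0) {φ g : Ω → ℝ}
    (hφ : StronglyMeasurable[m] φ)
    (hφg : Integrable (fun ω => φ ω * g ω) μ) (hg : Integrable g μ) :
    ∫ ω, φ ω * g ω ∂μ = ∫ ω, φ ω * (μ[g|m]) ω ∂μ := by
  have h2 : μ[(fun ω => φ ω * g ω)|m] =ᵐ[μ] fun ω => φ ω * (μ[g|m]) ω :=
    condExp_mul_of_stronglyMeasurable_left hφ hφg hg
  rw [← integral_condExp hm (f := fun ω => φ ω * g ω)]
  exact integral_congr_ae h2

lemma integral_le_sqrt_integral_sq [IsProbabilityMeasure μ] {f : Ω → ℝ}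
    (hf : Measurable f) {M : ℝ} (hb : ∀ ω, |f ω| ≤ M) (h0 : ∀ ω, 0 ≤ f ω) :
    ∫ ω, f ω ∂μ ≤ Real.sqrt (∫ ω, f ω ^ 2 ∂μ) := by
  have hmem : MemLp f 2 μ :=
    MemLp.of_bound hf.aestronglyMeasurable M
      (Filter.Eventually.of_forall fun ω => by simpa [Real.norm_eq_abs] using hb ω)
  have hv := ProbabilityTheory.variance_nonneg f μ
  rw [ProbabilityTheory.variance_eq_sub hmem] at hv
  have h1 : (∫ ω, f ω ∂μ) ^ 2 ≤ ∫ ω, f ω ^ 2 ∂μ := by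
    simp only [Pi.pow_apply] at hv
    linarith [hv]
  calc ∫ ω, f ω ∂μ = Real.sqrt ((∫ ω, f ω ∂μ) ^ 2) :=
        (Real.sqrt_sq (integral_nonneg h0)).symm
    _ ≤ _ := Real.sqrt_le_sqrt h1

end Helpers

section Helpers2
lemma eucNorm_nonneg {d : ℕ} (v : Fin d → ℝ) : 0 ≤ eucNorm v := Real.sqrt_nonneg _

lemma frobNorm_nonneg {d : ℕ} (M : Matrix (Fin d) (Fin d) ℝ) : 0 ≤ frobNorm M :=
  Real.sqrt_nonneg _

lemma abs_apply_le_eucNorm {d : ℕ} (v : Fin d → ℝ) (i : Fin d) : |v i| ≤ eucNorm v := by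
  rw [eucNorm, ← Real.sqrt_sq_eq_abs]
  exact Real.sqrt_le_sqrt (Finset.single_le_sum (fun k _ => sq_nonneg (v k)) (Finset.mem_univ i))

lemma cs_vec {d : ℕ} (f g : Fin d → ℝ) : |∑ i, f i * g i| ≤ eucNorm f * eucNorm g := by
  have h := Finset.sum_mul_sq_le_sq_mul_sq Finset.univ f g
  rw [← Real.sqrt_sq_eq_abs, eucNorm, eucNorm, ← Real.sqrt_mul (by positivity)]
  exact Real.sqrt_le_sqrt h

lemma eucNorm_sub_le {d : ℕ} (a b : Fin d → ℝ) :
    eucNorm (a - b) ≤ eucNorm a + eucNorm b := by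
  have hab : |∑ i, a i * b i| ≤ eucNorm a * eucNorm b := cs_vec a b
  have ha : eucNorm a ^ 2 = ∑ i, a i ^ 2 := Real.sq_sqrt (by positivity)
  have hb : eucNorm b ^ 2 = ∑ i, b i ^ 2 := Real.sq_sqrt (by positivity)
  have expand : ∑ i, (a - b) i ^ 2
      = (∑ i, a i ^ 2) - 2 * (∑ i, a i * b i) + ∑ i, b i ^ 2 := by
    simp only [Pi.sub_apply, sub_sq]
    rw [Finset.sum_add_distrib, Finset.sum_sub_distrib, Finset.mul_sum]
    ring_nf
  rw [eucNorm]
  calc Real.sqrt (∑ i, (a - b) i ^ 2) ≤ Real.sqrt ((eucNorm a + eucNorm b) ^ 2) := by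
        refine Real.sqrt_le_sqrt ?_
        rw [expand]
        have h1 : -(∑ i, a i * b i) ≤ eucNorm a * eucNorm b := (neg_le_abs _).trans hab
        nlinarith [eucNorm_nonneg a, eucNorm_nonneg b]
    _ = eucNorm a + eucNorm b := Real.sqrt_sq (add_nonneg (eucNorm_nonneg a) (eucNorm_nonneg b))

lemma mulVec_dot_le {d : ℕ} (A : Matrix (Fin d) (Fin d) ℝ) (v w : Fin d → ℝ) :
    |A.mulVec v ⬝ᵥ w| ≤ frobNorm A * eucNorm v * eucNorm w := by
  have h1 : |∑ i, A.mulVec v i * w i| ≤ eucNorm (A.mulVec v) * eucNorm w :=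
    cs_vec (A.mulVec v) w
  have h2 : eucNorm (A.mulVec v) ≤ frobNorm A * eucNorm v := by
    rw [eucNorm, frobNorm, eucNorm, ← Real.sqrt_mul (x := ∑ i, ∑ j, A i j ^ 2) (Finset.sum_nonneg fun i _ => Finset.sum_nonneg fun j _ => sq_nonneg _)]
    refine Real.sqrt_le_sqrt ?_
    rw [Finset.sum_mul]
    refine Finset.sum_le_sum fun i _ => ?_
    have := Finset.sum_mul_sq_le_sq_mul_sq Finset.univ (fun j => A i j) v
    simpa [Matrix.mulVec, dotProduct] using this
  calc |A.mulVec v ⬝ᵥ w| = |∑ i, A.mulVec v i * w i| := by rfl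
    _ ≤ eucNorm (A.mulVec v) * eucNorm w := h1
    _ ≤ frobNorm A * eucNorm v * eucNorm w := by
        have := eucNorm_nonneg w
        nlinarith [eucNorm_nonneg (A.mulVec v)]

end Helpers2

/-- The inverse-spectral-weighting nuisance-error bound from the proof of Proposition 2,
part 2: under ignorability with `‖f₀(x)‖ ≤ 1`, if `G₀(X)` is a.s. a Penrose pseudo-inverse
of `Σ₀(X)` and `π, π'` are policies with Euclidean norm at most `B`, then
`|E[((H(X) - G₀(X)) Z C)ᵀ (π(X) - π'(X))]| ≤ 2B (E[‖(H(X) - G₀(X)) Σ₀(X)‖²_Fro])^{1/2}`. -/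
theorem stmt18 {Ω : Type*} [MeasurableSpace Ω] (μ : Measure Ω) [IsProbabilityMeasure μ]
    {p d : ℕ} (X : Ω → Fin p → ℝ) (Z Y : Ω → Fin d → ℝ)
    (hX : Measurable X) (hZ : Measurable Z) (hY : Measurable Y)
    (hZb : ∃ M, ∀ ω, ‖Z ω‖ ≤ M) (hYb : ∃ M, ∀ ω, ‖Y ω‖ ≤ M)
    (C : Ω → ℝ) (hC : ∀ ω, C ω = Z ω ⬝ᵥ Y ω)
    (f₀ : (Fin p → ℝ) → Fin d → ℝ) (hf₀ : Measurable f₀)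
    (hf₀b : ∀ x, eucNorm (f₀ x) ≤ 1)
    (hf₀ce : ∀ j, (fun ω => f₀ (X ω) j) =ᵐ[μ]
      μ[(fun ω => Y ω j) | MeasurableSpace.comap X inferInstance])
    (S₀ : (Fin p → ℝ) → Matrix (Fin d) (Fin d) ℝ)
    (hS₀ : ∀ i j, Measurable fun x => S₀ x i j)
    (hS₀b : ∃ M, ∀ x i j, |S₀ x i j| ≤ M)
    (hS₀ce : ∀ i j, (fun ω => S₀ (X ω) i j) =ᵐ[μ]
      μ[(fun ω => Z ω i * Z ω j) | MeasurableSpace.comap X inferInstance])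
    (hIgn : (fun ω => Z ω ⬝ᵥ f₀ (X ω)) =ᵐ[μ]
      μ[C | MeasurableSpace.comap (fun ω => (X ω, Z ω)) inferInstance])
    (G₀ : (Fin p → ℝ) → Matrix (Fin d) (Fin d) ℝ)
    (hG₀ : ∀ i j, Measurable fun x => G₀ x i j)
    (hG₀b : ∃ M, ∀ x i j, |G₀ x i j| ≤ M)
    (hPen : ∀ᵐ ω ∂μ, Penrose (S₀ (X ω)) (G₀ (X ω)))
    (H : (Fin p → ℝ) → Matrix (Fin d) (Fin d) ℝ)
    (hH : ∀ i j, Measurable fun x => H x i j)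
    (hHb : ∃ M, ∀ x i j, |H x i j| ≤ M)
    (π π' : (Fin p → ℝ) → Fin d → ℝ) (hπ : Measurable π) (hπ' : Measurable π')
    (B : ℝ) (hB : 0 < B)
    (hπB : ∀ x, eucNorm (π x) ≤ B) (hπ'B : ∀ x, eucNorm (π' x) ≤ B) :
    |∫ ω, (H (X ω) - G₀ (X ω)).mulVec (C ω • Z ω) ⬝ᵥ (π (X ω) - π' (X ω)) ∂μ| ≤
      2 * B * Real.sqrt (∫ ω, frobNorm ((H (X ω) - G₀ (X ω)) * S₀ (X ω)) ^ 2 ∂μ) := by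
  classical
  have hm₁ : MeasurableSpace.comap (fun ω => (X ω, Z ω)) inferInstance
      ≤ ‹MeasurableSpace Ω› := (hX.prodMk hZ).comap_le
  have hm₂ : MeasurableSpace.comap X inferInstance ≤ ‹MeasurableSpace Ω› := hX.comap_le
  -- constants
  obtain ⟨MZ0, hMZ0⟩ := hZb
  obtain ⟨MY0, hMY0⟩ := hYb
  obtain ⟨MH0, hMH0⟩ := hHb
  obtain ⟨MG0, hMG0⟩ := hG₀b
  obtain ⟨MS0, hMS0⟩ := hS₀b
  set MZ := max MZ0 0 with hMZdef
  set MY := max MY0 0 with hMYdef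
  set MH := max MH0 0 with hMHdef
  set MG := max MG0 0 with hMGdef
  set MS := max MS0 0 with hMSdef
  have hMZ : 0 ≤ MZ := le_max_right _ _
  have hMY : 0 ≤ MY := le_max_right _ _
  have hMH : 0 ≤ MH := le_max_right _ _
  have hMG : 0 ≤ MG := le_max_right _ _
  have hMS : 0 ≤ MS := le_max_right _ _
  have hZc : ∀ ω j, |Z ω j| ≤ MZ := fun ω j => by
    have h1 : ‖Z ω j‖ ≤ ‖Z ω‖ := norm_le_pi_norm (Z ω) j
    rw [Real.norm_eq_abs] at h1
    exact h1.trans ((hMZ0 ω).trans (le_max_left _ _))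
  have hYc : ∀ ω j, |Y ω j| ≤ MY := fun ω j => by
    have h1 : ‖Y ω j‖ ≤ ‖Y ω‖ := norm_le_pi_norm (Y ω) j
    rw [Real.norm_eq_abs] at h1
    exact h1.trans ((hMY0 ω).trans (le_max_left _ _))
  have hHc : ∀ x i j, |H x i j| ≤ MH := fun x i j => (hMH0 x i j).trans (le_max_left _ _)
  have hGc : ∀ x i j, |G₀ x i j| ≤ MG := fun x i j => (hMG0 x i j).trans (le_max_left _ _)
  have hSc : ∀ x i j, |S₀ x i j| ≤ MS := fun x i j => (hMS0 x i j).trans (le_max_left _ _)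
  have hπc : ∀ x i, |π x i| ≤ B := fun x i => (abs_apply_le_eucNorm (π x) i).trans (hπB x)
  have hπ'c : ∀ x i, |π' x i| ≤ B := fun x i => (abs_apply_le_eucNorm (π' x) i).trans (hπ'B x)
  have hf₀c : ∀ x k, |f₀ x k| ≤ 1 := fun x k => (abs_apply_le_eucNorm (f₀ x) k).trans (hf₀b x)
  -- C is measurable and bounded
  have hCfun : C = fun ω => ∑ k, Z ω k * Y ω k := funext fun ω => hC ω
  have hCm : Measurable C := by
    rw [hCfun]
    exact Finset.measurable_sum _ fun k _ =>
      ((measurable_pi_apply k).comp hZ).mul ((measurable_pi_apply k).comp hY)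
  have hCb : ∀ ω, |C ω| ≤ d * (MZ * MY) := fun ω => by
    rw [hC ω]
    calc |∑ k, Z ω k * Y ω k| ≤ ∑ k, |Z ω k * Y ω k| := Finset.abs_sum_le_sum_abs _ _
      _ ≤ ∑ _k : Fin d, MZ * MY := Finset.sum_le_sum fun k _ => by
          rw [abs_mul]
          exact mul_le_mul (hZc ω k) (hYc ω k) (abs_nonneg _) hMZ
      _ = d * (MZ * MY) := by simp [Finset.sum_const, mul_comm]
  -- the kernel function g
  set g : Fin d → Fin d → (Fin p → ℝ) → ℝ :=
    fun i j x => (H x i j - G₀ x i j) * (π x i - π' x i) with hgdef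
  have hgm : ∀ i j, Measurable (g i j) := fun i j =>
    ((hH i j).sub (hG₀ i j)).mul
      (((measurable_pi_apply i).comp hπ).sub ((measurable_pi_apply i).comp hπ'))
  have hgb : ∀ i j x, |g i j x| ≤ (MH + MG) * (2 * B) := fun i j x => by
    rw [hgdef, abs_mul]
    refine mul_le_mul ?_ ?_ (abs_nonneg _) (by linarith)
    · exact (abs_sub _ _).trans (add_le_add (hHc x i j) (hGc x i j))
    · exact (abs_sub _ _).trans (by have := hπc x i; have := hπ'c x i; linarith)
  set Mg := (MH + MG) * (2 * B) with hMgdef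
  have hMg : 0 ≤ Mg := by positivity
  -- measurability wrt m₁ and m₂
  have hXZ1 : Measurable[MeasurableSpace.comap (fun ω => (X ω, Z ω)) inferInstance] (fun ω => (X ω, Z ω)) := measurable_iff_comap_le.mpr le_rfl
  have hX2 : Measurable[MeasurableSpace.comap X inferInstance] X := measurable_iff_comap_le.mpr le_rfl
  -- the key identity for each (i, j)
  have key : ∀ i j, ∫ ω, (g i j (X ω) * Z ω j) * C ω ∂μ
      = ∫ ω, g i j (X ω) * (∑ k, S₀ (X ω) j k * f₀ (X ω) k) ∂μ := by
    intro i j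
    have hφm : Measurable[MeasurableSpace.comap (fun ω => (X ω, Z ω)) inferInstance] (fun ω => g i j (X ω) * Z ω j) :=
      (((hgm i j).comp measurable_fst).comp hXZ1).mul
        ((measurable_pi_apply j).comp (measurable_snd.comp hXZ1))
    have hφm0 : Measurable (fun ω => g i j (X ω) * Z ω j) :=
      ((hgm i j).comp hX).mul ((measurable_pi_apply j).comp hZ)
    have hφb : ∀ ω, |g i j (X ω) * Z ω j| ≤ Mg * MZ := fun ω => by
      rw [abs_mul]; exact mul_le_mul (hgb i j (X ω)) (hZc ω j) (abs_nonneg _) hMg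
    have intC : Integrable C μ := integrable_of_bdd hCm hCb
    have intφC : Integrable (fun ω => (g i j (X ω) * Z ω j) * C ω) μ :=
      integrable_of_bdd (hφm0.mul hCm) (fun ω => by
        rw [abs_mul]
        exact mul_le_mul (hφb ω) (hCb ω) (abs_nonneg _) (by positivity))
    have e1 : ∫ ω, (g i j (X ω) * Z ω j) * C ω ∂μ
        = ∫ ω, (g i j (X ω) * Z ω j) * (μ[C|MeasurableSpace.comap (fun ω => (X ω, Z ω)) inferInstance]) ω ∂μ :=
      integral_mul_condexp_eq hm₁ hφm.stronglyMeasurable intφC intC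
    have e2 : ∫ ω, (g i j (X ω) * Z ω j) * (μ[C|MeasurableSpace.comap (fun ω => (X ω, Z ω)) inferInstance]) ω ∂μ
        = ∫ ω, (g i j (X ω) * Z ω j) * (Z ω ⬝ᵥ f₀ (X ω)) ∂μ := by
      refine integral_congr_ae ?_
      filter_upwards [hIgn] with ω h
      rw [← h]
    have e3 : ∫ ω, (g i j (X ω) * Z ω j) * (Z ω ⬝ᵥ f₀ (X ω)) ∂μ
        = ∫ ω, ∑ k, (g i j (X ω) * f₀ (X ω) k) * (Z ω j * Z ω k) ∂μ := by
      refine integral_congr_ae (Filter.Eventually.of_forall fun ω => ?_)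
      simp only [dotProduct, Finset.mul_sum]
      exact Finset.sum_congr rfl fun k _ => by ring
    have hψm0 : ∀ k, Measurable (fun ω => g i j (X ω) * f₀ (X ω) k) := fun k =>
      ((hgm i j).comp hX).mul (((measurable_pi_apply k).comp hf₀).comp hX)
    have hψb : ∀ k ω, |g i j (X ω) * f₀ (X ω) k| ≤ Mg := fun k ω => by
      rw [abs_mul]
      calc |g i j (X ω)| * |f₀ (X ω) k| ≤ Mg * 1 :=
            mul_le_mul (hgb i j (X ω)) (hf₀c (X ω) k) (abs_nonneg _) hMg
        _ = Mg := mul_one _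
    have hZZm : ∀ k, Measurable (fun ω => Z ω j * Z ω k) := fun k =>
      ((measurable_pi_apply j).comp hZ).mul ((measurable_pi_apply k).comp hZ)
    have intsummand : ∀ k, Integrable (fun ω => (g i j (X ω) * f₀ (X ω) k) * (Z ω j * Z ω k)) μ := by
      intro k
      refine integrable_of_bdd ((hψm0 k).mul (hZZm k)) (M := Mg * (MZ * MZ)) (fun ω => by
        rw [abs_mul]
        refine mul_le_mul (hψb k ω) ?_ (abs_nonneg _) hMg
        rw [abs_mul]
        exact mul_le_mul (hZc ω j) (hZc ω k) (abs_nonneg _) hMZ)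
    have e4 : ∫ ω, ∑ k, (g i j (X ω) * f₀ (X ω) k) * (Z ω j * Z ω k) ∂μ
        = ∑ k, ∫ ω, (g i j (X ω) * f₀ (X ω) k) * (Z ω j * Z ω k) ∂μ :=
      integral_finset_sum _ fun k _ => intsummand k
    have e5 : ∀ k, ∫ ω, (g i j (X ω) * f₀ (X ω) k) * (Z ω j * Z ω k) ∂μ
        = ∫ ω, (g i j (X ω) * f₀ (X ω) k) * S₀ (X ω) j k ∂μ := by
      intro k
      have hψm : Measurable[MeasurableSpace.comap X inferInstance] (fun ω => g i j (X ω) * f₀ (X ω) k) :=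
        (((hgm i j).mul ((measurable_pi_apply k).comp hf₀)).comp hX2)
      have intZZ : Integrable (fun ω => Z ω j * Z ω k) μ :=
        integrable_of_bdd (hZZm k) (M := MZ * MZ) (fun ω => by
          rw [abs_mul]; exact mul_le_mul (hZc ω j) (hZc ω k) (abs_nonneg _) hMZ)
      have e5a := integral_mul_condexp_eq hm₂ hψm.stronglyMeasurable (intsummand k) intZZ
      rw [e5a]
      refine integral_congr_ae ?_
      filter_upwards [hS₀ce j k] with ω h
      rw [← h]
    have e6 : ∑ k, ∫ ω, (g i j (X ω) * f₀ (X ω) k) * S₀ (X ω) j k ∂μ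
        = ∫ ω, ∑ k, (g i j (X ω) * f₀ (X ω) k) * S₀ (X ω) j k ∂μ := by
      refine (integral_finset_sum _ fun k _ => ?_).symm
      refine integrable_of_bdd ((hψm0 k).mul (hS₀ j k |>.comp hX)) (M := Mg * MS) (fun ω => by
        rw [abs_mul]
        exact mul_le_mul (hψb k ω) (hSc (X ω) j k) (abs_nonneg _) hMg)
    have e7 : ∫ ω, ∑ k, (g i j (X ω) * f₀ (X ω) k) * S₀ (X ω) j k ∂μ
        = ∫ ω, g i j (X ω) * (∑ k, S₀ (X ω) j k * f₀ (X ω) k) ∂μ := by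
      refine integral_congr_ae (Filter.Eventually.of_forall fun ω => ?_)
      simp only [Finset.mul_sum]
      exact Finset.sum_congr rfl fun k _ => by ring
    rw [e1, e2, e3, e4]
    rw [Finset.sum_congr rfl fun k _ => e5 k, e6, e7]
  -- the two integrands, expanded
  have expand : ∀ ω, (H (X ω) - G₀ (X ω)).mulVec (C ω • Z ω) ⬝ᵥ (π (X ω) - π' (X ω))
      = ∑ i, ∑ j, (g i j (X ω) * Z ω j) * C ω := by
    intro ω
    simp only [dotProduct, Matrix.mulVec, Finset.sum_mul]
    refine Finset.sum_congr rfl fun i _ => ?_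
    refine Finset.sum_congr rfl fun j _ => ?_
    simp only [hgdef, Matrix.sub_apply, Pi.sub_apply, Pi.smul_apply, smul_eq_mul]
    ring
  have collapse : ∀ ω, ∑ i, ∑ j, g i j (X ω) * (∑ k, S₀ (X ω) j k * f₀ (X ω) k)
      = ((H (X ω) - G₀ (X ω)) * S₀ (X ω)).mulVec (f₀ (X ω)) ⬝ᵥ (π (X ω) - π' (X ω)) := by
    intro ω
    simp only [dotProduct, Matrix.mulVec, Matrix.mul_apply, Matrix.sub_apply, Pi.sub_apply,
      Finset.sum_mul, Finset.mul_sum]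
    refine Finset.sum_congr rfl fun i _ => ?_
    rw [Finset.sum_comm]
    refine Finset.sum_congr rfl fun j _ => Finset.sum_congr rfl fun k _ => ?_
    simp only [hgdef]
    ring
  -- boundedness of the S₀–f₀ sum
  have hsumb : ∀ x (j : Fin d), |∑ k, S₀ x j k * f₀ x k| ≤ d * MS := by
    intro x j
    calc |∑ k, S₀ x j k * f₀ x k| ≤ ∑ k, |S₀ x j k * f₀ x k| := Finset.abs_sum_le_sum_abs _ _
      _ ≤ ∑ _k : Fin d, MS := Finset.sum_le_sum fun k _ => by
          rw [abs_mul]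
          calc |S₀ x j k| * |f₀ x k| ≤ MS * 1 :=
                mul_le_mul (hSc x j k) (hf₀c x k) (abs_nonneg _) hMS
            _ = MS := mul_one _
      _ = d * MS := by simp [Finset.sum_const, mul_comm]
  -- integrability of the summands
  have int1 : ∀ i j, Integrable (fun ω => (g i j (X ω) * Z ω j) * C ω) μ := by
    intro i j
    refine integrable_of_bdd ((((hgm i j).comp hX).mul ((measurable_pi_apply j).comp hZ)).mul hCm)
      (M := (Mg * MZ) * (d * (MZ * MY))) (fun ω => by
        rw [abs_mul]
        refine mul_le_mul ?_ (hCb ω) (abs_nonneg _) (by positivity)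
        rw [abs_mul]
        exact mul_le_mul (hgb i j (X ω)) (hZc ω j) (abs_nonneg _) hMg)
  have int2 : ∀ i j, Integrable (fun ω => g i j (X ω) * (∑ k, S₀ (X ω) j k * f₀ (X ω) k)) μ := by
    intro i j
    refine integrable_of_bdd (((hgm i j).comp hX).mul
      (Finset.measurable_sum _ fun k _ =>
        ((hS₀ j k).comp hX).mul (((measurable_pi_apply k).comp hf₀).comp hX)))
      (M := Mg * (d * MS)) (fun ω => by
        rw [abs_mul]
        exact mul_le_mul (hgb i j (X ω)) (hsumb (X ω) j) (abs_nonneg _) hMg)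
  -- step 1: replace the integrand using the conditional-expectation identities
  have step1 : ∫ ω, (H (X ω) - G₀ (X ω)).mulVec (C ω • Z ω) ⬝ᵥ (π (X ω) - π' (X ω)) ∂μ
      = ∫ ω, ((H (X ω) - G₀ (X ω)) * S₀ (X ω)).mulVec (f₀ (X ω)) ⬝ᵥ (π (X ω) - π' (X ω)) ∂μ := by
    calc ∫ ω, (H (X ω) - G₀ (X ω)).mulVec (C ω • Z ω) ⬝ᵥ (π (X ω) - π' (X ω)) ∂μ
        = ∫ ω, ∑ i, ∑ j, (g i j (X ω) * Z ω j) * C ω ∂μ :=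
          integral_congr_ae (Filter.Eventually.of_forall fun ω => expand ω)
      _ = ∑ i, ∑ j, ∫ ω, (g i j (X ω) * Z ω j) * C ω ∂μ := by
          rw [integral_finset_sum _ (fun i _ => integrable_finset_sum _ fun j _ => int1 i j)]
          exact Finset.sum_congr rfl fun i _ => integral_finset_sum _ fun j _ => int1 i j
      _ = ∑ i, ∑ j, ∫ ω, g i j (X ω) * (∑ k, S₀ (X ω) j k * f₀ (X ω) k) ∂μ :=
          Finset.sum_congr rfl fun i _ => Finset.sum_congr rfl fun j _ => key i j
      _ = ∫ ω, ∑ i, ∑ j, g i j (X ω) * (∑ k, S₀ (X ω) j k * f₀ (X ω) k) ∂μ := by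
          rw [integral_finset_sum _ (fun i _ => integrable_finset_sum _ fun j _ => int2 i j)]
          exact Finset.sum_congr rfl fun i _ => (integral_finset_sum _ fun j _ => int2 i j).symm
      _ = ∫ ω, ((H (X ω) - G₀ (X ω)) * S₀ (X ω)).mulVec (f₀ (X ω)) ⬝ᵥ (π (X ω) - π' (X ω)) ∂μ :=
          integral_congr_ae (Filter.Eventually.of_forall fun ω => collapse ω)
  rw [step1]
  -- the Frobenius-norm process
  set K := d * ((MH + MG) * MS) with hKdef
  have hK : 0 ≤ K := by positivity
  set F : Ω → ℝ := fun ω => frobNorm ((H (X ω) - G₀ (X ω)) * S₀ (X ω)) with hFdef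
  have hDm : ∀ i j, Measurable fun ω => ((H (X ω) - G₀ (X ω)) * S₀ (X ω)) i j := by
    intro i j
    simp only [Matrix.mul_apply, Matrix.sub_apply]
    exact Finset.measurable_sum _ fun k _ =>
      (((hH i k).comp hX).sub ((hG₀ i k).comp hX)).mul ((hS₀ k j).comp hX)
  have hDb : ∀ ω i j, |((H (X ω) - G₀ (X ω)) * S₀ (X ω)) i j| ≤ K := by
    intro ω i j
    simp only [Matrix.mul_apply, Matrix.sub_apply]
    calc |∑ k, (H (X ω) i k - G₀ (X ω) i k) * S₀ (X ω) k j|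
        ≤ ∑ k, |(H (X ω) i k - G₀ (X ω) i k) * S₀ (X ω) k j| := Finset.abs_sum_le_sum_abs _ _
      _ ≤ ∑ _k : Fin d, (MH + MG) * MS := Finset.sum_le_sum fun k _ => by
          rw [abs_mul]
          refine mul_le_mul ?_ (hSc (X ω) k j) (abs_nonneg _) (by positivity)
          exact (abs_sub _ _).trans (add_le_add (hHc (X ω) i k) (hGc (X ω) i k))
      _ = K := by simp [hKdef, Finset.sum_const, mul_comm]
  have hFm : Measurable F := by
    rw [hFdef]
    unfold frobNorm
    exact Real.continuous_sqrt.measurable.comp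
      (Finset.measurable_sum _ fun i _ => Finset.measurable_sum _ fun j _ => (hDm i j).pow_const 2)
  have hF0 : ∀ ω, 0 ≤ F ω := fun ω => frobNorm_nonneg _
  have hFb : ∀ ω, |F ω| ≤ Real.sqrt (d * (d * K ^ 2)) := by
    intro ω
    rw [abs_of_nonneg (hF0 ω), hFdef]
    unfold frobNorm
    refine Real.sqrt_le_sqrt ?_
    calc ∑ i, ∑ j, ((H (X ω) - G₀ (X ω)) * S₀ (X ω)) i j ^ 2
        ≤ ∑ _i : Fin d, ∑ _j : Fin d, K ^ 2 := by
          refine Finset.sum_le_sum fun i _ => Finset.sum_le_sum fun j _ => ?_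
          rw [← sq_abs]
          exact pow_le_pow_left₀ (abs_nonneg _) (hDb ω i j) 2
      _ = d * (d * K ^ 2) := by simp [Finset.sum_const, mul_comm, mul_assoc]
  -- pointwise bound on the new integrand
  have hptw : ∀ ω, |((H (X ω) - G₀ (X ω)) * S₀ (X ω)).mulVec (f₀ (X ω)) ⬝ᵥ (π (X ω) - π' (X ω))|
      ≤ F ω * (2 * B) := by
    intro ω
    refine (mulVec_dot_le _ (f₀ (X ω)) (π (X ω) - π' (X ω))).trans ?_
    have h1 : eucNorm (f₀ (X ω)) ≤ 1 := hf₀b _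
    have h2 : eucNorm (π (X ω) - π' (X ω)) ≤ 2 * B := by
      refine (eucNorm_sub_le _ _).trans ?_
      have := hπB (X ω); have := hπ'B (X ω); linarith
    have h3 : 0 ≤ eucNorm (f₀ (X ω)) := eucNorm_nonneg _
    have h4 : 0 ≤ eucNorm (π (X ω) - π' (X ω)) := eucNorm_nonneg _
    have h5 : 0 ≤ F ω := hF0 ω
    have h6 : frobNorm ((H (X ω) - G₀ (X ω)) * S₀ (X ω)) = F ω := rfl
    rw [h6]
    calc F ω * eucNorm (f₀ (X ω)) * eucNorm (π (X ω) - π' (X ω))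
        ≤ (F ω * 1) * (2 * B) :=
          mul_le_mul (mul_le_mul le_rfl h1 h3 h5) h2 h4 (by rw [mul_one]; exact h5)
      _ = F ω * (2 * B) := by ring
  -- measurability of the new integrand
  have hI2m : Measurable fun ω =>
      ((H (X ω) - G₀ (X ω)) * S₀ (X ω)).mulVec (f₀ (X ω)) ⬝ᵥ (π (X ω) - π' (X ω)) := by
    simp only [dotProduct, Matrix.mulVec, Pi.sub_apply]
    refine Finset.measurable_sum _ fun i _ => Measurable.mul ?_ ?_
    · exact Finset.measurable_sum _ fun k _ =>
        (hDm i k).mul (((measurable_pi_apply k).comp hf₀).comp hX)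
    · exact ((measurable_pi_apply i).comp (hπ.comp hX)).sub
        ((measurable_pi_apply i).comp (hπ'.comp hX))
  have hI2b : ∀ ω, |((H (X ω) - G₀ (X ω)) * S₀ (X ω)).mulVec (f₀ (X ω)) ⬝ᵥ (π (X ω) - π' (X ω))|
      ≤ Real.sqrt (d * (d * K ^ 2)) * (2 * B) := fun ω =>
    (hptw ω).trans (mul_le_mul_of_nonneg_right ((abs_of_nonneg (hF0 ω)) ▸ hFb ω) (by linarith))
  -- put it together
  have habs : |∫ ω, ((H (X ω) - G₀ (X ω)) * S₀ (X ω)).mulVec (f₀ (X ω)) ⬝ᵥ (π (X ω) - π' (X ω)) ∂μ|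
      ≤ ∫ ω, |((H (X ω) - G₀ (X ω)) * S₀ (X ω)).mulVec (f₀ (X ω)) ⬝ᵥ (π (X ω) - π' (X ω))| ∂μ := by
    simpa [Real.norm_eq_abs] using
      norm_integral_le_integral_norm (μ := μ)
        (f := fun ω => ((H (X ω) - G₀ (X ω)) * S₀ (X ω)).mulVec (f₀ (X ω)) ⬝ᵥ (π (X ω) - π' (X ω)))
  have hmono : ∫ ω, |((H (X ω) - G₀ (X ω)) * S₀ (X ω)).mulVec (f₀ (X ω)) ⬝ᵥ (π (X ω) - π' (X ω))| ∂μ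
      ≤ ∫ ω, F ω * (2 * B) ∂μ := by
    refine integral_mono ?_ ?_ hptw
    · exact integrable_of_bdd hI2m.abs (M := Real.sqrt (d * (d * K ^ 2)) * (2 * B))
        (fun ω => by rw [abs_abs]; exact hI2b ω)
    · exact (integrable_of_bdd hFm hFb).mul_const _
  have hL2 : ∫ ω, F ω ∂μ ≤ Real.sqrt (∫ ω, F ω ^ 2 ∂μ) :=
    integral_le_sqrt_integral_sq hFm hFb hF0
  calc |∫ ω, ((H (X ω) - G₀ (X ω)) * S₀ (X ω)).mulVec (f₀ (X ω)) ⬝ᵥ (π (X ω) - π' (X ω)) ∂μ|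
      ≤ ∫ ω, F ω * (2 * B) ∂μ := habs.trans hmono
    _ = (∫ ω, F ω ∂μ) * (2 * B) := integral_mul_const _ _
    _ ≤ Real.sqrt (∫ ω, F ω ^ 2 ∂μ) * (2 * B) := by
        refine mul_le_mul_of_nonneg_right hL2 (by linarith)
    _ = 2 * B * Real.sqrt (∫ ω, F ω ^ 2 ∂μ) := by ring
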